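/- Let r ≥ 2 be an integer, α₀, …, α_{r−1} ∈ ℂ, and set F(x,y,z) = x^r + x·y² + z² + Σ_{i=0}^{r−1} α_i·x^i, with zero set S ⊂ ℂ³. Let p : ℂ → ℂ be a polynomial function. If for every (x,y,z) ∈ S the point (x, −y, −z + p(x)) also lies in S, then p(x) = 0 for every x ∈ ℂ. -/
import Mathlib


/-- Key step for the ℤ/2ℤ-action on fibers of type C_r, r even: the correction
polynomial in the z-coordinate must vanish. -/
theorem stmt_7 (r : ℕ) (hr : 2 ≤ r) (α : ℕ → ℂ) (p : Polynomial ℂ)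
    (h : ∀ x y z : ℂ,
      x ^ r + x * y ^ 2 + z ^ 2 + ∑ i ∈ Finset.range r, α i * x ^ i = 0 →
      x ^ r + x * (-y) ^ 2 + (-z + p.eval x) ^ 2
        + ∑ i ∈ Finset.range r, α i * x ^ i = 0) :
    ∀ x : ℂ, p.eval x = 0 := by
  intro x
  set c : ℂ := x ^ r + ∑ i ∈ Finset.range r, α i * x ^ i with hc
  obtain ⟨z, hz⟩ := IsAlgClosed.exists_pow_nat_eq (-c) (n := 2) two_pos
  have hmem : ∀ w : ℂ, w ^ 2 = -c →
      x ^ r + x * (0:ℂ) ^ 2 + w ^ 2 + ∑ i ∈ Finset.range r, α i * x ^ i = 0 := by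
    intro w hw
    rw [hw]; ring_nf; rw [hc]; ring
  have h1 := h x 0 z (hmem z hz)
  have h2 := h x 0 (-z) (hmem (-z) (by rw [neg_pow]; simp [hz]))
  have e1 : (-z + p.eval x) ^ 2 = z ^ 2 := by
    linear_combination h1 - hmem z hz
  have e2 : (z + p.eval x) ^ 2 = z ^ 2 := by
    linear_combination h2 - hmem (-z) (by rw [neg_pow]; simp [hz])
  have hp2 : p.eval x ^ 2 = 0 := by linear_combination (e1 + e2) / 2
  exact pow_eq_zero_iff (by norm_num) |>.mp hp2
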